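/- Let G be a finite directed graph satisfying condition SC with parameter F (|F| ≤ f), let S be the unique source component of G−F, and let H be the subgraph of G induced on S ∪ N(F→S), where N(F→S) is the set of vertices of F with an edge into S. Then H also satisfies condition SC with parameter F: for every partition (A,B) of S ∪ N(F→S) with A−F and B−F nonempty, either A (f+1)-propagates to B−F avoiding F within H, or B (f+1)-propagates to A−F avoiding F within H. -/

import Mathlib

open Set

variable {V : Type*}

/-- A (directed) path: nonempty list of distinct vertices with consecutive edges. -/
def DiPath (E : V → V → Prop) (p : List V) : Prop :=
  p ≠ [] ∧ p.Nodup ∧ p.Chain' E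

/-- A path excludes `F` if none of its internal vertices lies in `F`. -/
def Excludes (F : Set V) (p : List V) : Prop :=
  ∀ x ∈ p.tail.dropLast, x ∉ F

/-- A path from (a vertex of) `A` to `v`. -/
def PathFromTo (E : V → V → Prop) (A : Set V) (v : V) (p : List V) : Prop :=
  DiPath E p ∧ (∃ a ∈ A, p.head? = some a) ∧ p.getLast? = some v

/-- There exist `n` pairwise internally-disjoint `A`-`v` paths excluding `F`
(sharing only the terminal `v`). -/
def DisjPaths (E : V → V → Prop) (F A : Set V) (v : V) (n : ℕ) : Prop :=
  ∃ P : Fin n → List V,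
    (∀ i, PathFromTo E A v (P i) ∧ Excludes F (P i)) ∧
    (∀ i j, i ≠ j → ∀ x, x ∈ P i → x ∈ P j → x = v)

/-- `A` (f+1)-propagates to every vertex of `B` avoiding `F`. -/
def Propagates (E : V → V → Prop) (f : ℕ) (F A B : Set V) : Prop :=
  ∀ v ∈ B, DisjPaths E F A v (f + 1)

/-- Condition SC with parameter `F`. -/
def CondSC (E : V → V → Prop) (f : ℕ) (F : Set V) : Prop :=
  ∀ A B : Set V, A ∪ B = Set.univ → A ∩ B = ∅ →
    (A \ F).Nonempty → (B \ F).Nonempty →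
    Propagates E f F A (B \ F) ∨ Propagates E f F B (A \ F)

/-- Reachability within the vertex set `W`. -/
def ReachIn (E : V → V → Prop) (W : Set V) : V → V → Prop :=
  Relation.ReflTransGen (fun a b => a ∈ W ∧ b ∈ W ∧ E a b)

/-- `S` is a (maximal) strongly connected component of the induced subgraph on `W`. -/
def IsSCCIn (E : V → V → Prop) (W S : Set V) : Prop :=
  S.Nonempty ∧ S ⊆ W ∧ (∀ u ∈ S, ∀ v ∈ S, ReachIn E W u v) ∧
  ∀ T, S ⊆ T → T ⊆ W → (∀ u ∈ T, ∀ v ∈ T, ReachIn E W u v) → T = S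

/-- `S` is a source component of `G − F`: an SCC of the induced subgraph on `V − F`
receiving no edge from a vertex of `V − F` outside `S`. -/
def IsSourceComponent (E : V → V → Prop) (F S : Set V) : Prop :=
  IsSCCIn E (Set.univ \ F) S ∧ ∀ u, u ∉ F → u ∉ S → ∀ s ∈ S, ¬ E u s

/-- In-neighborhood of `T` contained in `B`. -/
def inNbr (E : V → V → Prop) (B T : Set V) : Set V :=
  {u ∈ B | ∃ v ∈ T, E u v}

/-- `N(F→S)`: vertices of `F` with an edge into `S`. -/
def NFS (E : V → V → Prop) (F S : Set V) : Set V :=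
  {w ∈ F | ∃ s ∈ S, E w s}

/-- Edge relation of the subgraph induced on `U`. -/
def inducedE (E : V → V → Prop) (U : Set V) : V → V → Prop :=
  fun a b => a ∈ U ∧ b ∈ U ∧ E a b

/-- Condition NC with parameter `F`. -/
def CondNC (E : V → V → Prop) (f : ℕ) (F : Set V) : Prop :=
  ∀ L C R : Set V, L ∪ C ∪ R = Set.univ →
    L ∩ C = ∅ → L ∩ R = ∅ → C ∩ R = ∅ →
    (L \ F).Nonempty → (R \ F).Nonempty →
    f < (inNbr E (R ∪ C) (L \ F)).ncard ∨ f < (inNbr E (L ∪ C) (R \ F)).ncard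

/-- Condition SC with parameter `F` for the subgraph of `G` induced on `W`. -/
def CondSCOn (E : V → V → Prop) (f : ℕ) (F W : Set V) : Prop :=
  ∀ A B : Set V, A ∪ B = W → A ∩ B = ∅ →
    (A \ F).Nonempty → (B \ F).Nonempty →
    Propagates (inducedE E W) f F A (B \ F) ∨ Propagates (inducedE E W) f F B (A \ F)

lemma mem_dropLast_cons {b : V} {r : List V} {x : V} (h : x ∈ r.dropLast) :
    x ∈ (b :: r).dropLast := by
  cases r with
  | nil => simp at h
  | cons c r' =>
    rw [List.dropLast_cons₂]
    exact List.mem_cons_of_mem _ h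

lemma tail_in_S {E : V → V → Prop} {F S : Set V}
    (hS : IsSourceComponent E F S) :
    ∀ (p : List V) (v : V), p.Chain' E → Excludes F p → p.getLast? = some v → v ∈ S →
      ∀ x ∈ p.tail, x ∈ S := by
  intro p
  induction p with
  | nil => intro v _ _ h; simp at h
  | cons a q ih =>
    intro v hc he hl hv x hx
    simp only [List.tail_cons] at hx
    cases q with
    | nil => simp at hx
    | cons b r =>
      have hc' : (b :: r).Chain' E := (List.isChain_cons_cons.mp hc).2
      have he' : Excludes F (b :: r) := by
        intro y hy
        exact he y (mem_dropLast_cons hy)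
      have hl' : (b :: r).getLast? = some v := by
        rw [List.getLast?_cons_cons] at hl; exact hl
      have hr : ∀ y ∈ r, y ∈ S := ih v hc' he' hl' hv
      have hb : b ∈ S := by
        cases r with
        | nil =>
          simp only [List.getLast?_singleton, Option.some.injEq] at hl'
          rwa [hl']
        | cons c r' =>
          have hcS : c ∈ S := hr c (by simp)
          have hEbc : E b c := (List.isChain_cons_cons.mp hc').1
          have hbF : b ∉ F := by
            apply he
            simp only [List.tail_cons]
            rw [List.dropLast_cons₂]
            exact List.mem_cons_self
          by_contra hbS
          exact hS.2 b hbF hbS c hcS hEbc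
      rcases List.mem_cons.mp hx with rfl | hq
      · exact hb
      · exact hr x hq

lemma path_in_W {E : V → V → Prop} {F S : Set V}
    (hS : IsSourceComponent E F S) (p : List V) (v : V)
    (hc : p.Chain' E) (he : Excludes F p) (hl : p.getLast? = some v) (hv : v ∈ S) :
    ∀ x ∈ p, x ∈ S ∪ NFS E F S := by
  intro x hx
  cases p with
  | nil => simp at hx
  | cons a q =>
    have htail := tail_in_S hS (a :: q) v hc he hl hv
    rcases List.mem_cons.mp hx with rfl | hq
    · cases q with
      | nil =>
        left
        simp only [List.getLast?_singleton, Option.some.injEq] at hl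
        rwa [hl]
      | cons b r =>
        have hb : b ∈ S := htail b (by simp)
        have hEab : E x b := (List.isChain_cons_cons.mp hc).1
        by_cases haF : x ∈ F
        · right; exact ⟨haF, b, hb, hEab⟩
        · left
          by_contra haS
          exact hS.2 x haF haS b hb hEab
    · left; exact htail x (by simpa using hq)

lemma chain'_induced {E : V → V → Prop} {W : Set V} :
    ∀ p : List V, p.Chain' E → (∀ x ∈ p, x ∈ W) → p.Chain' (inducedE E W) := by
  intro p
  induction p with
  | nil => intro _ _; exact List.isChain_nil
  | cons a q ih =>
    intro hc hm
    cases q with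
    | nil => simp [List.Chain', List.isChain_singleton]
    | cons b r =>
      rw [List.Chain', List.isChain_cons_cons] at hc ⊢
      exact ⟨⟨hm a (by simp), hm b (by simp), hc.1⟩,
        ih hc.2 (fun x hx => hm x (List.mem_cons_of_mem _ hx))⟩

/-- The subgraph induced on `S ∪ N(F→S)` also satisfies condition SC with parameter `F`. -/
theorem induced_source_satisfies_SC [Fintype V] (E : V → V → Prop) (f : ℕ) (F S : Set V)
    (hF : F.ncard ≤ f) (hSC : CondSC E f F)
    (hS : IsSourceComponent E F S)
    (hUniq : ∀ S', IsSourceComponent E F S' → S' = S) :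
    CondSCOn E f F (S ∪ NFS E F S) := by
  intro A B hAB hABdisj hA hB
  set W := S ∪ NFS E F S with hWdef
  have hBW : B ⊆ W := by rw [← hAB]; exact Set.subset_union_right
  have hAW : A ⊆ W := by rw [← hAB]; exact Set.subset_union_left
  have hNF : NFS E F S ⊆ F := fun x hx => hx.1
  have hWS : ∀ x, x ∈ W → x ∉ F → x ∈ S := by
    intro x hx hxF
    rcases hx with h | h
    · exact h
    · exact absurd (hNF h) hxF
  have hU : (A ∪ (Set.univ \ W)) ∪ B = Set.univ := by
    ext x
    simp only [Set.mem_union, Set.mem_diff, Set.mem_univ, iff_true, true_and]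
    by_cases hx : x ∈ W
    · rw [← hAB] at hx
      rcases hx with h | h
      · exact Or.inl (Or.inl h)
      · exact Or.inr h
    · exact Or.inl (Or.inr hx)
  have hD : (A ∪ (Set.univ \ W)) ∩ B = ∅ := by
    ext x
    simp only [Set.mem_inter_iff, Set.mem_union, Set.mem_diff, Set.mem_univ, true_and,
      Set.mem_empty_iff_false, iff_false]
    rintro ⟨h1 | h1, h2⟩
    · have : x ∈ (∅ : Set V) := hABdisj ▸ Set.mem_inter h1 h2
      exact this
    · exact h1 (hBW h2)
  have hA' : ((A ∪ (Set.univ \ W)) \ F).Nonempty := by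
    obtain ⟨a, ha, haF⟩ := hA
    exact ⟨a, Or.inl ha, haF⟩
  rcases hSC (A ∪ (Set.univ \ W)) B hU hD hA' hB with h | h
  · left
    intro v hv
    have hvS : v ∈ S := hWS v (hBW hv.1) hv.2
    obtain ⟨P, hP1, hP2⟩ := h v hv
    refine ⟨P, fun i => ?_, hP2⟩
    obtain ⟨⟨⟨hne, hnd, hch⟩, ⟨a, ha, hhead⟩, hlast⟩, hexc⟩ := hP1 i
    have hmem : ∀ x ∈ P i, x ∈ W := path_in_W hS (P i) v hch hexc hlast hvS
    have haP : a ∈ P i := List.mem_of_mem_head? hhead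
    have haA : a ∈ A := by
      rcases ha with h' | h'
      · exact h'
      · exact absurd (hmem a haP) h'.2
    exact ⟨⟨⟨hne, hnd, chain'_induced (P i) hch hmem⟩, ⟨a, haA, hhead⟩, hlast⟩, hexc⟩
  · right
    intro v hv
    have hvS : v ∈ S := hWS v (hAW hv.1) hv.2
    obtain ⟨P, hP1, hP2⟩ := h v ⟨Or.inl hv.1, hv.2⟩
    refine ⟨P, fun i => ?_, hP2⟩
    obtain ⟨⟨⟨hne, hnd, hch⟩, ⟨a, ha, hhead⟩, hlast⟩, hexc⟩ := hP1 i
    have hmem : ∀ x ∈ P i, x ∈ W := path_in_W hS (P i) v hch hexc hlast hvS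
    exact ⟨⟨⟨hne, hnd, chain'_induced (P i) hch hmem⟩, ⟨a, ha, hhead⟩, hlast⟩, hexc⟩
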